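/- Let m ≥ 1, let O = {l ∈ ℝᵐ : lᵢ > 0 for all i} be the open positive orthant, let K : O → ℝᵐ be continuous, and let H : O → ℝ be differentiable with ∂H/∂lᵢ(l) = −Kᵢ(l) for all l ∈ O and all i. Let l : [0,∞) → O be a differentiable curve with lᵢ'(t) = Kᵢ(l(t))·lᵢ(t) for all i and t ≥ 0, and suppose l(t) converges as t → ∞ to some l̄ ∈ O. Then K(l̄) = 0. -/

import Mathlib

open Real Set Filter

theorem flow_limit_has_zero_curvature (m : ℕ) (hm : 1 ≤ m)
    (K : (Fin m → ℝ) → Fin m → ℝ)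
    (hK : ContinuousOn K {l : Fin m → ℝ | ∀ i, 0 < l i})
    (H : (Fin m → ℝ) → ℝ)
    -- `H` is differentiable on the positive orthant with `∂H/∂lᵢ = −Kᵢ`
    (hH : ∀ l : Fin m → ℝ, (∀ i, 0 < l i) →
      HasFDerivAt H
        (∑ i : Fin m, (-(K l i)) • (ContinuousLinearMap.proj i : (Fin m → ℝ) →L[ℝ] ℝ)) l)
    (l : ℝ → Fin m → ℝ)
    (hpos : ∀ t, 0 ≤ t → ∀ i, 0 < l t i)
    (hflow : ∀ t, 0 ≤ t → ∀ i,
      HasDerivWithinAt (fun s => l s i) (K (l t) i * l t i) (Set.Ici (0 : ℝ)) t)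
    (lbar : Fin m → ℝ) (hlbar : ∀ i, 0 < lbar i)
    (hconv : Tendsto l atTop (nhds lbar)) :
    K lbar = 0 := by
  by_contra hKne
  -- the Lyapunov function along the flow
  set F : ℝ → ℝ := fun t => H (l t) with hF
  set g : ℝ → ℝ := fun t => ∑ i, K (l t) i ^ 2 * l t i with hg
  -- derivative of F along the flow
  have hFderiv : ∀ t, 0 ≤ t → HasDerivWithinAt F (-(g t)) (Set.Ici (0 : ℝ)) t := by
    intro t ht
    have hl : HasDerivWithinAt l (fun i => K (l t) i * l t i) (Set.Ici (0 : ℝ)) t :=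
      hasDerivWithinAt_pi.2 fun i => hflow t ht i
    have := (hH (l t) (hpos t ht)).comp_hasDerivWithinAt t hl
    refine this.congr_deriv ?_
    simp only [ContinuousLinearMap.sum_apply, ContinuousLinearMap.smul_apply,
      ContinuousLinearMap.proj_apply, smul_eq_mul, hg, ← Finset.sum_neg_distrib]
    apply Finset.sum_congr rfl
    intro i _
    ring
  -- `K ∘ l` tends to `K lbar`
  have hmem : ∀ᶠ t in atTop, l t ∈ {x : Fin m → ℝ | ∀ i, 0 < x i} := by
    filter_upwards [eventually_ge_atTop (0 : ℝ)] with t ht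
    exact hpos t ht
  have hKl : Tendsto (fun t => K (l t)) atTop (nhds (K lbar)) :=
    (hK lbar hlbar).tendsto.comp
      (tendsto_nhdsWithin_of_tendsto_nhds_of_eventually_within _ hconv hmem)
  -- `g` tends to a positive constant `c`
  set c : ℝ := ∑ i, K lbar i ^ 2 * lbar i with hc
  have hgc : Tendsto g atTop (nhds c) := by
    apply tendsto_finset_sum
    intro i _
    exact ((((hKl.apply_nhds i).pow 2)).mul ((continuous_apply i).continuousAt.tendsto.comp hconv))
  have hcpos : 0 < c := by
    obtain ⟨i0, hi0⟩ : ∃ i, K lbar i ≠ 0 := by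
      by_contra h
      push_neg at h
      exact hKne (funext h)
    apply Finset.sum_pos'
    · intro i _
      exact mul_nonneg (sq_nonneg _) (hlbar i).le
    · exact ⟨i0, Finset.mem_univ _,
        mul_pos (by positivity) (hlbar i0)⟩
  -- `F` tends to `H lbar`
  have hFconv : Tendsto F atTop (nhds (H lbar)) :=
    (hH lbar hlbar).continuousAt.tendsto.comp hconv
  -- choose T past which g t > c/2
  obtain ⟨T, hT⟩ := ((hgc.eventually (eventually_gt_nhds (half_lt_self hcpos))).and
    (eventually_ge_atTop (1 : ℝ))).exists_forall_of_atTop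
  have hT1 : (1 : ℝ) ≤ T := (hT T le_rfl).2
  have hT0 : (0 : ℝ) < T := lt_of_lt_of_le one_pos hT1
  -- ψ := F + (c/2)·id is antitone on [T, ∞)
  have hanti : AntitoneOn (fun t => F t + c / 2 * t) (Set.Ici T) := by
    apply antitoneOn_of_hasDerivWithinAt_nonpos (convex_Ici T)
      (f' := fun t => -(g t) + c / 2)
    · intro x hx
      have hx0 : (0 : ℝ) ≤ x := le_trans hT0.le hx
      exact ((hFderiv x hx0).continuousWithinAt.mono
        (fun y hy => le_trans hT0.le hy : Set.Ici T ⊆ Set.Ici 0)).add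
        ((continuous_const.mul continuous_id).continuousWithinAt)
    · intro x hx
      rw [interior_Ici] at hx
      have hx0 : (0 : ℝ) < x := lt_of_le_of_lt hT0.le hx
      have hD : HasDerivAt F (-(g x)) x :=
        (hFderiv x hx0.le).hasDerivAt (Ici_mem_nhds hx0)
      exact (hD.add ((hasDerivAt_id x).const_mul (c / 2))).hasDerivWithinAt.congr_deriv
        (by ring)
    · intro x hx
      rw [interior_Ici] at hx
      have := (hT x (le_of_lt hx)).1
      linarith
  -- contradiction: F t ≤ F T + (c/2)(T - t) → -∞ but F converges
  have hlow : ∀ᶠ t in atTop, H lbar - 1 < F t :=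
    hFconv.eventually (eventually_gt_nhds (by linarith))
  have hbig : ∀ᶠ t in atTop,
      F T + c / 2 * T - c / 2 * t < H lbar - 1 := by
    have h1 : Tendsto (fun t : ℝ => -(c / 2 * t)) atTop atBot :=
      tendsto_neg_atTop_atBot.comp
        ((tendsto_const_mul_atTop_of_pos (half_pos hcpos)).2 tendsto_id)
    have h2 := tendsto_atBot_add_const_left atTop (F T + c / 2 * T) h1
    simp only [← sub_eq_add_neg] at h2
    exact h2.eventually (eventually_lt_atBot _)
  obtain ⟨t, ht1, ht2, ht3⟩ := (hlow.and (hbig.and (eventually_ge_atTop T))).exists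
  have := hanti (Set.self_mem_Ici) ht3 ht3
  simp only at this
  -- F t + c/2 * t ≤ F T + c/2 * T
  linarith
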